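/- Let T be a tree, let H be a group of automorphisms of T, let Λ be a finite nonempty set of vertices of T all moved within Λ by H (i.e., H leaves Λ invariant), and suppose H fixes an end ε of T. Then H fixes some vertex of T. Specifically, any vertex x of T such that the component of T \ {x} containing ε contains no element of Λ is fixed by H. -/

import Mathlib

section Rays

variable {V : Type*}

/-- A ray (half-line) in a graph: a one-way infinite cycle-free path. -/
def IsRay (T : SimpleGraph V) (f : ℕ → V) : Prop :=
  Function.Injective f ∧ ∀ n : ℕ, T.Adj (f n) (f (n + 1))

/-- `v` is reachable from `u` by a path avoiding the set `F`. -/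
def ReachAvoiding (T : SimpleGraph V) (F : Set V) (u v : V) : Prop :=
  Relation.ReflTransGen (fun x y => T.Adj x y ∧ x ∉ F ∧ y ∉ F) u v

/-- Two rays are equivalent (belong to the same end) if for every finite set of
vertices the rays have points connected by a path avoiding it. -/
def RaysEquivalent (T : SimpleGraph V) (f g : ℕ → V) : Prop :=
  ∀ F : Finset V, ∃ m n : ℕ, f m ∉ (F : Set V) ∧ g n ∉ (F : Set V) ∧
    ReachAvoiding T (F : Set V) (f m) (g n)

end Rays

section AuxLemmas

variable {V : Type*} {T : SimpleGraph V}

lemma reachAvoiding_mono {F F' : Set V} (hFF : F ⊆ F') {u v : V}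
    (h : ReachAvoiding T F' u v) : ReachAvoiding T F u v := by
  induction h with
  | refl => exact .refl
  | tail _ hstep ih =>
      exact ih.tail ⟨hstep.1, fun hh => hstep.2.1 (hFF hh), fun hh => hstep.2.2 (hFF hh)⟩

lemma reachAvoiding_symm {F : Set V} {u v : V} (h : ReachAvoiding T F u v) :
    ReachAvoiding T F v u := by
  unfold ReachAvoiding at *
  haveI : Std.Symm (fun x y : V => T.Adj x y ∧ x ∉ F ∧ y ∉ F) :=
    ⟨fun _ _ hab => ⟨hab.1.symm, hab.2.2, hab.2.1⟩⟩
  exact Relation.ReflTransGen.symmetric.symm _ _ h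

lemma walk_reachAvoiding {u v : V} (p : T.Walk u v) {w : V} (hw : w ∉ p.support) :
    ReachAvoiding T {w} u v := by
  induction p with
  | nil => exact .refl
  | @cons a b c hadj q ih =>
      rw [SimpleGraph.Walk.support_cons] at hw
      simp only [List.mem_cons, not_or] at hw
      refine Relation.ReflTransGen.head ⟨hadj, ?_, ?_⟩ (ih hw.2)
      · simp only [Set.mem_singleton_iff]
        exact fun e => hw.1 e.symm
      · simp only [Set.mem_singleton_iff]
        intro e
        exact hw.2 (e ▸ q.start_mem_support)

lemma dist_add_of_not_reachAvoiding (hc : T.Connected) {u v w : V}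
    (h : ¬ ReachAvoiding T {v} u w) :
    T.dist u w = T.dist u v + T.dist v w := by
  haveI := Classical.decEq V
  obtain ⟨p, hp⟩ := (hc.preconnected u w).exists_walk_length_eq_dist
  by_cases hv : v ∈ p.support
  · have h1 : T.dist u v ≤ (p.takeUntil v hv).length := SimpleGraph.dist_le _
    have h2 : T.dist v w ≤ (p.dropUntil v hv).length := SimpleGraph.dist_le _
    have h3 : (p.takeUntil v hv).length + (p.dropUntil v hv).length = p.length := by
      rw [← SimpleGraph.Walk.length_append, p.take_spec hv]
    have h4 := hc.dist_triangle (u := u) (v := v) (w := w)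
    omega
  · exact absurd (walk_reachAvoiding p hv) h

lemma reachAvoiding_of_dist_lt (hc : T.Connected) {u v w : V}
    (h : T.dist u w < T.dist u v + T.dist v w) : ReachAvoiding T {v} u w := by
  haveI := Classical.decEq V
  obtain ⟨p, hp⟩ := (hc.preconnected u w).exists_walk_length_eq_dist
  refine walk_reachAvoiding p (fun hv => ?_)
  have h1 : T.dist u v ≤ (p.takeUntil v hv).length := SimpleGraph.dist_le _
  have h2 : T.dist v w ≤ (p.dropUntil v hv).length := SimpleGraph.dist_le _
  have h3 : (p.takeUntil v hv).length + (p.dropUntil v hv).length = p.length := by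
    rw [← SimpleGraph.Walk.length_append, p.take_spec hv]
  omega

/-- Along the tail of a ray (past any possible visit to `w`), all vertices are
connected avoiding `w`. -/
lemma ray_tail_reach (hc : T.Connected) {f : ℕ → V} (hf : IsRay T f) (w : V) :
    ∃ N : ℕ, ∀ m n : ℕ, N ≤ m → N ≤ n → ReachAvoiding T {w} (f m) (f n) := by
  have hne : ∃ N : ℕ, ∀ j, N ≤ j → f j ≠ w := by
    by_cases hw : ∃ k, f k = w
    · obtain ⟨k, hk⟩ := hw
      refine ⟨k + 1, fun j hj e => ?_⟩
      have : j = k := hf.1 (e.trans hk.symm)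
      omega
    · push_neg at hw
      exact ⟨0, fun j _ => hw j⟩
  obtain ⟨N, hN⟩ := hne
  have key : ∀ (d m : ℕ), N ≤ m → ReachAvoiding T {w} (f m) (f (m + d)) := by
    intro d
    induction d with
    | zero => intro m _; exact .refl
    | succ d ih =>
        intro m hm
        refine (ih m hm).tail ⟨hf.2 (m + d), ?_, ?_⟩
        · simpa using hN (m + d) (by omega)
        · simpa [← Nat.add_assoc] using hN (m + d + 1) (by omega)
  refine ⟨N, fun m n hm hn => ?_⟩
  rcases le_total m n with h | h
  · have := key (n - m) m hm
    rwa [Nat.add_sub_cancel' h] at this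
  · have := key (m - n) n hn
    rw [Nat.add_sub_cancel' h] at this
    exact reachAvoiding_symm this

end AuxLemmas

/-- Let a group `H` act by automorphisms on a tree `T`, let `Λ` be
a finite nonempty invariant set of vertices, and suppose `H` fixes an end `ε` of `T`
(represented by the ray `f`). Then `H` fixes some vertex of `T`: specifically, any
vertex `x` such that the component of `T \ {x}` containing `ε` contains no element
of `Λ` is fixed by `H`. -/
theorem finite_invariant_set_and_fixed_end_gives_fixed_vertex
    {V : Type*} {H : Type*} [Group H] [MulAction H V]
    (T : SimpleGraph V) (hT : T.IsTree)
    (hadj : ∀ (h : H) (u v : V), T.Adj u v ↔ T.Adj (h • u) (h • v))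
    (Λ : Finset V) (hne : Λ.Nonempty)
    (hinv : ∀ (h : H), ∀ l ∈ Λ, h • l ∈ Λ)
    (f : ℕ → V) (hray : IsRay T f)
    (hend : ∀ h : H, RaysEquivalent T (fun n => h • f n) f)
    (x : V)
    (hx : ∀ l ∈ Λ, ∃ N : ℕ, ∀ n ≥ N, ¬ ReachAvoiding T {x} l (f n)) :
    ∀ h : H, h • x = x := by
  classical
  have hc : T.Connected := hT.isConnected
  -- the action preserves distance
  have hdist : ∀ (g : H) (u v : V), T.dist (g • u) (g • v) = T.dist u v := by
    have le : ∀ (g : H) (u v : V), T.dist (g • u) (g • v) ≤ T.dist u v := by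
      intro g u v
      obtain ⟨p, hp⟩ := (hc.preconnected u v).exists_walk_length_eq_dist
      have := SimpleGraph.dist_le
        (p.map (⟨fun a => g • a, fun {a b} hab => (hadj g a b).mp hab⟩ : T →g T))
      rwa [SimpleGraph.Walk.length_map, hp] at this
    intro g u v
    refine le_antisymm (le g u v) ?_
    have := le g⁻¹ (g • u) (g • v)
    simpa [inv_smul_smul] using this
  -- transport of reachability avoiding a single vertex
  have hreach_smul : ∀ (g : H) (w u v : V), ReachAvoiding T {w} u v →
      ReachAvoiding T {g • w} (g • u) (g • v) := by
    intro g w u v hr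
    induction hr with
    | refl => exact .refl
    | tail _ hstep ih =>
        refine ih.tail ⟨(hadj g _ _).mp hstep.1, ?_, ?_⟩
        · simp only [Set.mem_singleton_iff]
          intro e; exact hstep.2.1 (by simpa using MulAction.injective g e)
        · simp only [Set.mem_singleton_iff]
          intro e; exact hstep.2.2 (by simpa using MulAction.injective g e)
  -- each g • f is a ray
  have hray_smul : ∀ g : H, IsRay T (fun n => g • f n) := by
    intro g
    exact ⟨fun a b e => hray.1 (MulAction.injective g e),
      fun n => (hadj g _ _).mp (hray.2 n)⟩
  -- separation transfers from the ray `g • f` to the equivalent ray `f`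
  have transfer : ∀ (g : H) (w u : V),
      (∃ N, ∀ n ≥ N, ¬ ReachAvoiding T {w} u (g • f n)) →
      ∃ N, ∀ n ≥ N, ¬ ReachAvoiding T {w} u (f n) := by
    intro g w u ⟨N, hN⟩
    obtain ⟨N₁, hN₁⟩ := ray_tail_reach hc hray w
    obtain ⟨N₂, hN₂⟩ := ray_tail_reach hc (hray_smul g) w
    set F : Finset V := {w} ∪ (Finset.range (max N₂ N + 1)).image (fun i => g • f i)
      ∪ (Finset.range (N₁ + 1)).image f with hF
    obtain ⟨m, n, hm, hn, hmn⟩ := hend g F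
    have hmN : max N₂ N + 1 ≤ m := by
      by_contra hcon
      push_neg at hcon
      exact hm (by
        simp only [hF, Finset.coe_union, Set.mem_union]
        refine Or.inl (Or.inr ?_)
        simp only [Finset.coe_image, Finset.coe_range, Set.mem_image]
        exact ⟨m, by simpa using Nat.lt_of_lt_of_le hcon (le_refl _), rfl⟩)
    have hnN : N₁ + 1 ≤ n := by
      by_contra hcon
      push_neg at hcon
      exact hn (by
        simp only [hF, Finset.coe_union, Set.mem_union]
        refine Or.inr ?_
        simp only [Finset.coe_image, Finset.coe_range, Set.mem_image]
        exact ⟨n, by simpa using hcon, rfl⟩)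
    have hwF : ({w} : Set V) ⊆ (F : Set V) := by
      simp only [hF, Finset.coe_union, Set.singleton_subset_iff, Set.mem_union]
      exact Or.inl (Or.inl (by simp))
    have hmn' : ReachAvoiding T {w} (g • f m) (f n) := reachAvoiding_mono hwF hmn
    refine ⟨N₁, fun n' hn' hr => ?_⟩
    have t1 : ReachAvoiding T {w} (f n') (f n) := hN₁ n' n hn' (by omega)
    have t2 : ReachAvoiding T {w} (f n) (g • f m) := reachAvoiding_symm hmn'
    exact hN m (by omega) ((hr.trans t1).trans t2)
  -- Sep: notation for separation relative to f
  -- sep_smul: Sep w u → Sep (g•w) (g•u)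
  have sep_smul : ∀ (g : H) (w u : V),
      (∃ N, ∀ n ≥ N, ¬ ReachAvoiding T {w} u (f n)) →
      ∃ N, ∀ n ≥ N, ¬ ReachAvoiding T {g • w} (g • u) (f n) := by
    intro g w u ⟨N, hN⟩
    refine transfer g _ _ ⟨N, fun n hn hr => ?_⟩
    have := hreach_smul g⁻¹ _ _ _ hr
    simp only [inv_smul_smul] at this
    exact hN n hn this
  -- the chain argument
  obtain ⟨l, hl⟩ := hne
  have chain : ∀ g : H,
      (∃ N, ∀ n ≥ N, ¬ ReachAvoiding T {g • x} x (f n)) → g • x = x := by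
    intro g hS
    by_contra hne'
    have hc1 : 1 ≤ T.dist x (g • x) := hc.pos_dist_of_ne (fun e => hne' e.symm)
    set c := T.dist x (g • x) with hcdef
    have claim : ∀ k : ℕ, ∃ N, ∀ n ≥ N,
        T.dist x (f n) = k * c + T.dist ((g ^ k) • x) (f n) := by
      intro k
      induction k with
      | zero => exact ⟨0, fun n _ => by simp⟩
      | succ k ih =>
          obtain ⟨N, hN⟩ := ih
          have hSk : ∃ N', ∀ n ≥ N',
              ¬ ReachAvoiding T {(g ^ (k + 1)) • x} ((g ^ k) • x) (f n) := by
            have := sep_smul (g ^ k) (g • x) x hS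
            have he : (g ^ k) • g • x = (g ^ (k + 1)) • x := by
              rw [pow_succ, mul_smul]
              -- (g^(k+1)) • x = (g^k * g) • x = g^k • (g • x)
            rwa [he] at this
          obtain ⟨N', hN'⟩ := hSk
          refine ⟨max N N', fun n hn => ?_⟩
          have e1 := hN n (le_trans (le_max_left _ _) hn)
          have e2 := dist_add_of_not_reachAvoiding hc (hN' n (le_trans (le_max_right _ _) hn))
          have e3 : T.dist ((g ^ k) • x) ((g ^ (k + 1)) • x) = c := by
            have : (g ^ (k + 1)) • x = (g ^ k) • g • x := by rw [pow_succ, mul_smul]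
            rw [this, hdist (g ^ k) x (g • x)]
          rw [e1, e2, e3]
          ring
    -- bound via Λ
    set B := (Λ ×ˢ Λ).sup (fun p : V × V => T.dist p.1 p.2) with hB
    have bound : ∀ k : ℕ, k * c ≤ 2 * T.dist l x + B := by
      intro k
      obtain ⟨N, hN⟩ := claim k
      have e := hN N le_rfl
      have tri1 : T.dist x (f N) ≤ T.dist x ((g ^ k) • x) + T.dist ((g ^ k) • x) (f N) :=
        hc.dist_triangle
      have h1 : k * c ≤ T.dist x ((g ^ k) • x) := by omega
      have tri2 : T.dist x ((g ^ k) • x) ≤ T.dist x l + T.dist l ((g ^ k) • x) :=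
        hc.dist_triangle
      have tri3 : T.dist l ((g ^ k) • x) ≤ T.dist l ((g ^ k) • l) + T.dist ((g ^ k) • l) ((g ^ k) • x) :=
        hc.dist_triangle
      have e4 : T.dist ((g ^ k) • l) ((g ^ k) • x) = T.dist l x := hdist _ _ _
      have e5 : T.dist l ((g ^ k) • l) ≤ B := by
        rw [hB]
        exact Finset.le_sup (f := fun p : V × V => T.dist p.1 p.2)
          (show (l, (g ^ k) • l) ∈ Λ ×ˢ Λ from Finset.mem_product.mpr ⟨hl, hinv (g ^ k) l hl⟩)
      have e6 : T.dist x l = T.dist l x := SimpleGraph.dist_comm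
      omega
    have hk := bound (2 * T.dist l x + B + 1)
    have : 2 * T.dist l x + B + 1 ≤ (2 * T.dist l x + B + 1) * c :=
      Nat.le_mul_of_pos_right _ (by omega)
    omega
  -- main argument
  intro h
  by_cases hxy : h • x = x
  · exact hxy
  exfalso
  have S1 : ∃ N, ∀ n ≥ N, ¬ ReachAvoiding T {x} l (f n) := hx l hl
  have S2 : ∃ N, ∀ n ≥ N, ¬ ReachAvoiding T {h • x} l (f n) := by
    have h1 := hx (h⁻¹ • l) (hinv h⁻¹ l hl)
    have h2 := sep_smul h x (h⁻¹ • l) h1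
    simpa [smul_inv_smul] using h2
  obtain ⟨N₁, hN₁⟩ := S1
  obtain ⟨N₂, hN₂⟩ := S2
  set y := h • x with hy
  have hyx : y ≠ x := hxy
  rcases lt_trichotomy (T.dist l x) (T.dist l y) with hlt | heq | hgt
  · -- y separates x from the end; chain with h gives h • x = x, contradiction
    refine hxy (chain h ⟨N₂, fun n hn hr => ?_⟩)
    have hlx : ReachAvoiding T {y} l x :=
      reachAvoiding_of_dist_lt hc (by omega)
    exact hN₂ n hn (hlx.trans hr)
  · -- equal distances: contradiction directly
    set n := max N₁ N₂ with hn
    have e1 := dist_add_of_not_reachAvoiding hc (hN₁ n (le_max_left _ _))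
    have e2 := dist_add_of_not_reachAvoiding hc (hN₂ n (le_max_right _ _))
    have hxyd : 1 ≤ T.dist x y := hc.pos_dist_of_ne (fun e => hyx e.symm)
    have hyxd : 1 ≤ T.dist y x := hc.pos_dist_of_ne hyx
    have hr1 : ReachAvoiding T {y} l x :=
      reachAvoiding_of_dist_lt hc (by omega)
    have hr2 : ReachAvoiding T {y} x (f n) :=
      reachAvoiding_of_dist_lt hc (by
        have exy : T.dist x (f n) = T.dist y (f n) := by omega
        omega)
    exact hN₂ n (le_max_right _ _) (hr1.trans hr2)
  · -- x separates y from the end; chain with h⁻¹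
    have hSxy : ∃ N, ∀ n ≥ N, ¬ ReachAvoiding T {x} y (f n) := by
      refine ⟨N₁, fun n hn hr => ?_⟩
      have hly : ReachAvoiding T {x} l y :=
        reachAvoiding_of_dist_lt hc (by omega)
      exact hN₁ n hn (hly.trans hr)
    have h2 := sep_smul h⁻¹ x y hSxy
    have he : h⁻¹ • y = x := by rw [hy, inv_smul_smul]
    rw [he] at h2
    have := chain h⁻¹ h2
    exact hxy ((inv_smul_eq_iff.mp this).symm)
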